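/- The binary tree automorphism f determined by the recursive decomposition formulas f=(ℓ,r)σ, ℓ=(r,m)σ, r=(m,r)σ, m=(n,f)σ, n=(r,m) is not a bounded automorphism; that is, the sums Σ_{u ∈ X^n} α_u(f) over the vertices u of level n are not uniformly bounded over all n. -/

import Mathlib

/-!
We model the group `Aut(T)` of automorphisms of the binary rooted tree via portraits:
an automorphism is uniquely determined by the function `List Bool → Bool` recording,
for every vertex `u` (a finite binary word, `false = 0`, `true = 1`), whether the
automorphism is active (i.e. swaps the two subtrees) at `u`.  Under this identification
`α_u(g) = g u`, the section of `g` at `u` is `fun v => g (u ++ v)`, and the group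
operation corresponds to composition of tree automorphisms.
-/

/-- Automorphisms of the binary rooted tree, encoded by their portraits. -/
def AutT : Type := List Bool → Bool

namespace AutT

/-- The section of a tree automorphism at a first-level vertex. -/
def sec (g : AutT) (x : Bool) : AutT := fun u => g (x :: u)

/-- The section of a tree automorphism at an arbitrary vertex `u`. -/
def secAt (g : AutT) (u : List Bool) : AutT := fun v => g (u ++ v)

/-- The activity (decoration of the portrait) of `g` at the vertex `u`:
`α_u(g) = 1` iff `g` is active at `u`. -/
def alpha (g : AutT) (u : List Bool) : Bool := g u

/-- The action of a tree automorphism on the vertices of the tree. -/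
def act : AutT → List Bool → List Bool
  | _, [] => []
  | g, x :: u => (xor (g []) x) :: act (sec g x) u

/-- Auxiliary function defining the product of two tree automorphisms
(`g * h` acts as `g` followed by `h`). -/
def mulAux : List Bool → AutT → AutT → Bool
  | [], g, h => xor (g []) (h [])
  | x :: u, g, h => mulAux u (sec g x) (sec h (xor x (g [])))

instance : Mul AutT := ⟨fun g h u => mulAux u g h⟩

/-- Auxiliary function defining the inverse of a tree automorphism. -/
def invAux : List Bool → AutT → Bool
  | [], g => g []
  | x :: u, g => invAux u (sec g (xor x (g [])))

instance : One AutT := ⟨fun _ => false⟩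
instance : Inv AutT := ⟨fun g u => invAux u g⟩

lemma one_apply (u : List Bool) : (1 : AutT) u = false := rfl

lemma mul_apply_nil (g h : AutT) : (g * h) [] = xor (g []) (h []) := rfl

lemma mul_apply_cons (g h : AutT) (x : Bool) (u : List Bool) :
    (g * h) (x :: u) = (sec g x * sec h (xor x (g []))) u := rfl

lemma sec_mul (g h : AutT) (x : Bool) :
    sec (g * h) x = sec g x * sec h (xor x (g [])) := rfl

lemma sec_one (x : Bool) : sec (1 : AutT) x = 1 := rfl

lemma inv_apply_nil (g : AutT) : (g⁻¹ : AutT) [] = g [] := rfl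

lemma sec_inv (g : AutT) (x : Bool) :
    sec (g⁻¹ : AutT) x = (sec g (xor x (g [])))⁻¹ := rfl

private lemma mul_assoc' (g h k : AutT) : g * h * k = g * (h * k) := by
  funext u
  induction u generalizing g h k with
  | nil => simp [mul_apply_nil, Bool.xor_assoc]
  | cons x u ih =>
      rw [mul_apply_cons, mul_apply_cons, sec_mul, mul_apply_nil, sec_mul, ih,
        Bool.xor_assoc]

private lemma one_mul' (g : AutT) : 1 * g = g := by
  funext u
  induction u generalizing g with
  | nil => simp [mul_apply_nil, one_apply]
  | cons x u ih => rw [mul_apply_cons, sec_one, one_apply, Bool.xor_false, ih]; rfl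

private lemma inv_mul_cancel' (g : AutT) : g⁻¹ * g = 1 := by
  funext u
  induction u generalizing g with
  | nil => simp [mul_apply_nil, inv_apply_nil, one_apply]
  | cons x u ih =>
      rw [mul_apply_cons, inv_apply_nil, sec_inv, ih]; rfl

instance : Group AutT :=
  Group.ofLeftAxioms mul_assoc' one_mul' inv_mul_cancel'

/-- The generator `a = (1,1)σ` of the Grigorchuk group. -/
def genA : AutT := fun u => decide (u = [])

/-- The generators `b`, `c`, `d` of the Grigorchuk group, defined simultaneously:
`bcdAux 0 = b = (a, c)`, `bcdAux 1 = c = (a, d)`, `bcdAux 2 = d = (1, b)`. -/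
def bcdAux : Fin 3 → List Bool → Bool
  | _, [] => false
  | i, false :: u => if i.val = 2 then false else decide (u = [])
  | i, true :: u => bcdAux (i + 1) u

/-- The generator `b = (a, c)` of the Grigorchuk group. -/
def genB : AutT := bcdAux 0

/-- The generator `c = (a, d)` of the Grigorchuk group. -/
def genC : AutT := bcdAux 1

/-- The generator `d = (1, b)` of the Grigorchuk group. -/
def genD : AutT := bcdAux 2

/-- The Grigorchuk group, as a subgroup of the group of binary rooted tree
automorphisms. -/
def Grigorchuk : Subgroup AutT := Subgroup.closure {genA, genB, genC, genD}

/-- `β_{xy}(g) = α_{xy}(g) + α_{x ȳ 0}(g) + α_{x ȳ 1}(g)` (mod 2). -/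
def beta (g : AutT) (x y : Bool) : Bool :=
  xor (g [x, y]) (xor (g [x, !y, false]) (g [x, !y, true]))

end AutT

namespace AutT

/-- The transition function of the 5-state automaton defining the automorphism `f`
(states: `0 = f`, `1 = ℓ`, `2 = r`, `3 = m`, `4 = n`), encoding the decomposition
formulas `f = (ℓ,r)σ`, `ℓ = (r,m)σ`, `r = (m,r)σ`, `m = (n,f)σ`, `n = (r,m)`. -/
def fStep : Fin 5 → Bool → Fin 5 := fun i x =>
  ![![1, 2], ![2, 3], ![3, 2], ![4, 0], ![2, 3]] i (cond x 1 0)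

/-- The portraits of the five states: the states `f`, `ℓ`, `r`, `m` are active at the
root and `n` is not. -/
def fPort : Fin 5 → List Bool → Bool
  | i, [] => ![true, true, true, true, false] i
  | i, x :: u => fPort (fStep i x) u

/-- The binary tree automorphism `f` determined by the recursive decomposition formulas
`f = (ℓ,r)σ`, `ℓ = (r,m)σ`, `r = (m,r)σ`, `m = (n,f)σ`, `n = (r,m)`. -/
def fAut : AutT := fPort 0

end AutT

open AutT

/-- The automorphism `f` is not bounded: the number of active vertices
of `f` at level `n` is not uniformly bounded over all `n`. -/
lemma fPort_append_true : ∀ (u : List Bool) (i : Fin 5), fPort i (u ++ [true]) = true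
  | [], i => by fin_cases i <;> rfl
  | x :: u, i => fPort_append_true u (fStep i x)

theorem fAut_not_bounded :
    ¬ ∃ C : ℕ, ∀ n : ℕ,
      (∑ v : Fin n → Bool, if alpha fAut (List.ofFn v) = true then 1 else 0) ≤ C := by
  rintro ⟨C, hC⟩
  have key : ∀ n : ℕ, (2 : ℕ) ^ n ≤
      ∑ v : Fin (n + 1) → Bool, if alpha fAut (List.ofFn v) = true then 1 else 0 := by
    intro n
    have hact : ∀ v : Fin (n + 1) → Bool, v (Fin.last n) = true →
        alpha fAut (List.ofFn v) = true := by
      intro v hv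
      have : List.ofFn v = List.ofFn (fun i => v i.castSucc) ++ [v (Fin.last n)] := by
        rw [List.ofFn_succ', List.concat_eq_append]
      rw [alpha, fAut, this, hv, fPort_append_true]
    have hinj : Set.InjOn (fun g : Fin n → Bool => (Fin.snoc g true : Fin (n + 1) → Bool))
        (Finset.univ : Finset (Fin n → Bool)) := by
      intro a _ b _ hab
      funext i
      have := congrFun hab i.castSucc
      simpa using this
    calc (2:ℕ) ^ n = ∑ _g : Fin n → Bool, 1 := by
            simp [Finset.card_univ]
      _ = ∑ g : Fin n → Bool,
            (if alpha fAut (List.ofFn ((Fin.snoc g true : Fin (n + 1) → Bool))) = true then 1 else 0) := by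
            refine Finset.sum_congr rfl fun g _ => ?_
            rw [hact _ (by simp), if_pos rfl]
      _ = ∑ v ∈ Finset.image (fun g : Fin n → Bool => (Fin.snoc g true : Fin (n + 1) → Bool)) Finset.univ,
            (if alpha fAut (List.ofFn v) = true then 1 else 0) := by
            rw [Finset.sum_image hinj]
      _ ≤ _ := Finset.sum_le_sum_of_subset_of_nonneg (Finset.subset_univ _)
            (fun v _ _ => by positivity)
  have h1 := hC (C + 1)
  have h2 := key C
  have h3 : C < 2 ^ C := Nat.lt_two_pow_self (n := C)
  omega
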